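/- Let S_0 = ∅, S_1, …, S_b be the sequence of sets produced by the greedy algorithm (at step t, S_{t+1} = S_t ∪ {e_t} where e_t maximizes the marginal gain Δ_e f(S_t) over all elements e ∈ V_i \ S_t with i ranging over indices such that |S_t ∩ V_i| < b_i), let b̂ = min_{i∈[k]} b_i, and let S* be a feasible set maximizing f. Then (1 − (1 − α·γ/b)^{b̂}) · f(S*) ≤ α · f(S_b). -/

import Mathlib

set_option maxHeartbeats 1000000

set_option maxHeartbeats 1000000


lemma aux_pow_ineq (γ α c : ℝ) (m : ℕ) (hγ0 : 0 < γ) (hγ1 : γ ≤ 1) (hα0 : 0 ≤ α)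
    (hα1 : α ≤ 1) (hc : 1 ≤ c) (hm : (m : ℝ) ≤ c - 1) :
    (1 - α) * (γ / c) + (1 - γ / c) * (1 - α * γ / (c - 1)) ^ m
      ≤ (1 - α * γ / c) ^ (m + 1) := by
  have hc0 : (0:ℝ) < c := by linarith
  rcases Nat.eq_zero_or_pos m with hm0 | hmpos
  · subst hm0
    apply le_of_eq
    field_simp
    rw [zero_add, pow_one, mul_div_assoc', mul_comm c, mul_div_assoc, div_self hc0.ne', mul_one]
    ring
  · have hm1 : (1:ℝ) ≤ (m:ℝ) := by exact_mod_cast hmpos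
    have hc2 : (2:ℝ) ≤ c := by linarith
    set u : ℝ := α * γ with hu
    have hu0 : 0 ≤ u := mul_nonneg hα0 (le_of_lt hγ0)
    have huγ : u ≤ γ := by nlinarith
    have hu1 : u ≤ 1 := le_trans huγ hγ1
    have hc1 : (0:ℝ) < c - 1 := by linarith
    have hcu : (0:ℝ) < c - u := by linarith
    set δ : ℝ := u / ((c - 1) * (c - u)) with hδ
    have hδ0 : 0 ≤ δ := by positivity
    have hδ1 : δ ≤ 1 := by
      rw [hδ, div_le_one (by positivity)]
      nlinarith
    have hfac : (1 - u / (c - 1)) = (1 - u / c) * (1 - δ) := by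
      rw [hδ]; field_simp; ring
    have h1δ : 0 ≤ 1 - δ := by linarith
    have h1uc : 0 ≤ 1 - u / c := by
      have : u / c ≤ 1 := by rw [div_le_one hc0]; linarith
      linarith
    have hγc : 0 ≤ 1 - γ / c := by
      have : γ / c ≤ 1 := by rw [div_le_one hc0]; linarith
      linarith
    have hmδpos : (0:ℝ) < 1 + (m:ℝ) * δ := by positivity
    -- (1-δ)^m * (1+mδ) ≤ 1
    have hpow1 : (1 - δ) ^ m * (1 + (m:ℝ) * δ) ≤ 1 := by
      have h1 : (1 + (m:ℝ) * δ) ≤ (1 + δ) ^ m := by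
        have := one_add_mul_le_pow (a := δ) (by linarith) m
        linarith
      have h2 : (1 - δ) ^ m * (1 + (m:ℝ) * δ) ≤ (1 - δ) ^ m * (1 + δ) ^ m :=
        mul_le_mul_of_nonneg_left h1 (by positivity)
      have h3 : (1 - δ) ^ m * (1 + δ) ^ m = ((1 - δ) * (1 + δ)) ^ m := (mul_pow _ _ _).symm
      have h4 : ((1 - δ) * (1 + δ)) ^ m ≤ 1 :=
        pow_le_one₀ (by nlinarith) (by nlinarith)
      calc (1 - δ) ^ m * (1 + (m:ℝ) * δ) ≤ (1 - δ) ^ m * (1 + δ) ^ m := h2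
        _ = ((1 - δ) * (1 + δ)) ^ m := h3
        _ ≤ 1 := h4
    -- Bernoulli
    have hBern : 1 - (m:ℝ) * u / c ≤ (1 - u / c) ^ m := by
      have h := one_add_mul_le_pow (a := -(u/c))
        (by nlinarith [div_nonneg hu0 (le_of_lt hc0)]) m
      have : 1 + (m:ℝ) * (-(u/c)) = 1 - (m:ℝ) * u / c := by ring
      rw [this] at h
      have h2 : (1 + -(u/c)) = (1 - u/c) := by ring
      rwa [h2] at h
    set w : ℝ := (m:ℝ) * u with hw
    have hw0 : 0 ≤ w := by positivity
    have hwle : w ≤ (c - 1) * u := mul_le_mul_of_nonneg_right hm hu0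
    -- polynomial core
    have hbr1 : (c - (c-1)*u) * (c-u) - (1-u)*(c + (c-1)*(c-u)) = (c-1)*u := by ring
    have hb2 : (c - (c-1)*u) * (c-u) ≤ (c-w)*(c-u) :=
      mul_le_mul_of_nonneg_right (by linarith) (le_of_lt hcu)
    have hb3 : (γ-u)*(c + (c-1)*(c-u)) ≤ (1-u)*(c + (c-1)*(c-u)) :=
      mul_le_mul_of_nonneg_right (by linarith) (by nlinarith)
    have hbracket : 0 ≤ (c-w)*(c-u) - (γ-u)*(c + (c-1)*(c-u)) := by nlinarith
    have hexp : (c-w)*(c-u)*((c-1)*(γ-u)+w) - c*(γ-u)*((c-1)*(c-u)+w)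
        = w * ((c-w)*(c-u) - (γ-u)*(c + (c-1)*(c-u))) := by ring
    have key : c * (γ - u) * ((c - 1) * (c - u) + w)
        ≤ (c - w) * (c - u) * ((c - 1) * (γ - u) + w) := by
      nlinarith [mul_nonneg hw0 hbracket]
    -- main2 : with divisions
    have hmδw : (m:ℝ) * δ = w / ((c-1)*(c-u)) := by
      rw [hδ, hw]; field_simp
    have main2 : (γ - u) * (1 + (m:ℝ) * δ) / c
        ≤ (1 - w / c) * ((γ - u) / c + w / (c * (c - 1))) := by
      rw [← sub_nonneg, hmδw]
      have hrw : (1 - w/c) * ((γ-u)/c + w/(c*(c-1))) - (γ-u)*(1 + w/((c-1)*(c-u)))/c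
          = ((c-w)*(c-u)*((c-1)*(γ-u)+w) - c*(γ-u)*((c-1)*(c-u)+w)) / (c^2*(c-1)*(c-u)) := by
        field_simp
      rw [hrw]
      apply div_nonneg (by linarith) (by positivity)
    -- combine with Bernoulli
    have hbrpos : 0 ≤ (γ-u)/c + w/(c*(c-1)) :=
      add_nonneg (div_nonneg (by linarith) (le_of_lt hc0)) (div_nonneg hw0 (by positivity))
    have hT : (1 - w/c) * ((γ-u)/c + w/(c*(c-1))) ≤ (1-u/c)^m * ((γ-u)/c + w/(c*(c-1))) := by
      apply mul_le_mul_of_nonneg_right _ hbrpos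
      have : 1 - w/c = 1 - (m:ℝ)*u/c := by rw [hw]
      linarith [hBern, this]
    have hstep2 : (γ-u) * (1 + (m:ℝ)*δ) / c ≤ (1-u/c)^m * ((γ-u)/c + w/(c*(c-1))) :=
      le_trans main2 hT
    -- identity for the (m+1) power
    have hid : (1 - u / c) * (1 + (m:ℝ) * δ) = 1 - u / c + w / (c * (c - 1)) := by
      rw [hmδw]; field_simp
    have hexp2 : (1-u/c)^(m+1)*(1+(m:ℝ)*δ) - (1-γ/c)*(1-u/c)^m
        = (1-u/c)^m * ((γ-u)/c + w/(c*(c-1))) := by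
      rw [pow_succ]
      have : (1-u/c)^m * (1-u/c) * (1+(m:ℝ)*δ) = (1-u/c)^m * ((1-u/c) * (1+(m:ℝ)*δ)) := by ring
      rw [this, hid]
      field_simp
      ring
    have hfinal : (γ-u)/c + (1-γ/c)*((1-u/c)^m/(1+(m:ℝ)*δ)) ≤ (1-u/c)^(m+1) := by
      have h : ((γ-u)/c)*(1+(m:ℝ)*δ) + (1-γ/c)*(1-u/c)^m ≤ (1-u/c)^(m+1)*(1+(m:ℝ)*δ) := by
        have e1 : (γ-u) * (1 + (m:ℝ)*δ) / c = ((γ-u)/c)*(1+(m:ℝ)*δ) := by ring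
        rw [e1] at hstep2
        linarith [hstep2, hexp2]
      calc (γ-u)/c + (1-γ/c)*((1-u/c)^m/(1+(m:ℝ)*δ))
          = (((γ-u)/c)*(1+(m:ℝ)*δ) + (1-γ/c)*(1-u/c)^m)/(1+(m:ℝ)*δ) := by
            field_simp
        _ ≤ ((1-u/c)^(m+1)*(1+(m:ℝ)*δ))/(1+(m:ℝ)*δ) := by
            gcongr
        _ = (1-u/c)^(m+1) := by
            rw [mul_div_assoc, div_self (ne_of_gt hmδpos), mul_one]
    -- final assembly
    have hZ : (1-u/(c-1))^m ≤ (1-u/c)^m/(1+(m:ℝ)*δ) := by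
      rw [hfac, mul_pow, le_div_iff₀ hmδpos]
      have : (1-u/c)^m * (1-δ)^m * (1+(m:ℝ)*δ) = (1-u/c)^m * ((1-δ)^m * (1+(m:ℝ)*δ)) := by ring
      rw [this]
      calc (1-u/c)^m * ((1-δ)^m * (1+(m:ℝ)*δ)) ≤ (1-u/c)^m * 1 :=
            mul_le_mul_of_nonneg_left hpow1 (by positivity)
        _ = (1-u/c)^m := mul_one _
    have hA : (1-α)*(γ/c) = (γ-u)/c := by rw [hu]; ring
    have hB : (1-γ/c)*(1-u/(c-1))^m ≤ (1-γ/c)*((1-u/c)^m/(1+(m:ℝ)*δ)) :=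
      mul_le_mul_of_nonneg_left hZ hγc
    linarith [hfinal, hB, hA]

/-- Greedy for monotone non-submodular maximization under a partition matroid:
if `γ` is a partition-matroid diminishing-return ratio and `α` a
partition-matroid curvature of the monotone normalized function `f`, and
`S 0 = ∅, S 1, …, S b` is a run of the greedy algorithm, then
`(1 − (1 − α·γ/b)^b̂) · f(S*) ≤ α · f(S b)` for any feasible maximizer `S*`,
where `b̂ = min_i b_i`. -/
theorem greedy_partition_matroid_ratio_two
    {ι : Type*} [Fintype ι] [DecidableEq ι]
    (k : ℕ) (hk : 0 < k) (part : ι → Fin k) (bi : Fin k → ℕ)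
    (hbi : ∀ i, 1 ≤ bi i ∧ bi i ≤ (Finset.univ.filter fun x => part x = i).card)
    (b : ℕ) (hb : b = ∑ i, bi i)
    (bhat : ℕ) (hbhat_le : ∀ i, bhat ≤ bi i) (hbhat_mem : ∃ i, bi i = bhat)
    (f : Finset ι → ℝ)
    (hmono : ∀ S T : Finset ι, S ⊆ T → f S ≤ f T)
    (hf0 : f (∅ : Finset ι) = 0)
    (γ α : ℝ) (hγ0 : 0 < γ) (hγ1 : γ ≤ 1) (hα0 : 0 ≤ α) (hα1 : α ≤ 1)
    -- γ is a partition-matroid diminishing-return ratio of f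
    (hDR : ∀ S T : Finset ι, S ⊆ T →
      (∀ i, ((T \ S).filter fun x => part x = i).card ≤ bi i) →
      ∀ e ∉ T, γ * (f (insert e T) - f T) ≤ f (insert e S) - f S)
    -- α is a partition-matroid curvature of f
    (hCurv : ∀ S T : Finset ι, S ⊆ T →
      (∀ i, ((T \ S).filter fun x => part x = i).card ≤ bi i) →
      ∀ e ∉ T, f (insert e T) - f T ≥ (1 - α) * (f (insert e S) - f S))
    -- S is the sequence of sets produced by the greedy algorithm
    (S : ℕ → Finset ι)
    (hS0 : S 0 = ∅)
    (hstep : ∀ t < b, ∃ e ∉ S t,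
      ((S t).filter fun x => part x = part e).card < bi (part e) ∧
      S (t + 1) = insert e (S t) ∧
      ∀ e' ∉ S t, ((S t).filter fun x => part x = part e').card < bi (part e') →
        f (insert e' (S t)) - f (S t) ≤ f (insert e (S t)) - f (S t))
    -- S* is a feasible set maximizing f
    (Sstar : Finset ι)
    (hfeas : ∀ i, (Sstar.filter fun x => part x = i).card ≤ bi i)
    (hopt : ∀ Q : Finset ι, (∀ i, (Q.filter fun x => part x = i).card ≤ bi i) → f Q ≤ f Sstar) :
    (1 - (1 - α * γ / (b : ℝ)) ^ bhat) * f Sstar ≤ α * f (S b) := by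
  classical
  obtain ⟨i0, hi0⟩ := hbhat_mem
  have hbhatb : bhat ≤ b := by
    rw [hb, ← hi0]
    exact Finset.single_le_sum (fun i _ => Nat.zero_le _) (Finset.mem_univ i0)
  have hιne : Nonempty ι := by
    have h1 := (hbi i0).1
    have h2 := (hbi i0).2
    have h3 : 0 < (Finset.univ.filter fun x => part x = i0).card := by omega
    obtain ⟨x, -⟩ := Finset.card_pos.mp h3
    exact ⟨x⟩
  choose! e he1 he2 he3 he4 using hstep
  -- basic chain facts
  have hsub : ∀ t, t < b → S t ⊆ S (t + 1) := by
    intro t ht; rw [he3 t ht]; exact Finset.subset_insert _ _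
  have hmono2 : ∀ t u, t ≤ u → u ≤ b → S t ⊆ S u := by
    intro t u htu
    induction u with
    | zero => intro _; have : t = 0 := Nat.le_zero.mp htu; rw [this]
    | succ n ih =>
      intro hub
      rcases Nat.eq_or_lt_of_le htu with heq | hlt
      · rw [heq]
      · exact (ih (Nat.lt_succ_iff.mp hlt) (by omega)).trans (hsub n (by omega))
  have hcard : ∀ t, t ≤ b → (S t).card = t := by
    intro t
    induction t with
    | zero => intro _; rw [hS0]; simp
    | succ n ih =>
      intro hnb
      rw [he3 n (by omega), Finset.card_insert_of_notMem (he1 n (by omega)), ih (by omega)]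
  have hfeasS : ∀ t, t ≤ b → ∀ i, ((S t).filter fun x => part x = i).card ≤ bi i := by
    intro t
    induction t with
    | zero => intro _ i; rw [hS0]; simp
    | succ n ih =>
      intro hnb i
      rw [he3 n (by omega), Finset.filter_insert]
      by_cases hpi : part (e n) = i
      · rw [if_pos hpi]
        have hni : e n ∉ (S n).filter fun x => part x = i :=
          fun hmem => (he1 n (by omega)) (Finset.mem_of_mem_filter _ hmem)
        rw [Finset.card_insert_of_notMem hni]
        have h2 := he2 n (by omega)
        rw [hpi] at h2
        omega
      · rw [if_neg hpi]; exact ih (by omega) i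
  have hρnn : ∀ t, t < b → 0 ≤ f (S (t + 1)) - f (S t) := by
    intro t ht
    have := hmono (S t) (S (t + 1)) (hsub t ht); linarith
  -- abbreviations
  set ρ : ℕ → ℝ := fun t => f (S (t + 1)) - f (S t) with hρ
  set σ : ℕ → ℝ := fun t => ∑ j ∈ Finset.range t, (if e j ∈ Sstar then ρ j else 0) with hσ
  set sc : ℕ → ℕ := fun t => ((Finset.range t).filter fun j => e j ∈ Sstar).card with hsc
  set X : ℕ → ℝ := fun t => f Sstar - α * f (S t) - (1 - α) * σ t with hX
  have hσ0 : σ 0 = 0 := by simp [hσ]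
  have hsc0 : sc 0 = 0 := by simp [hsc]
  have htel : ∀ t, (∑ j ∈ Finset.range t, ρ j) = f (S t) - f (S 0) := by
    intro t
    simp only [hρ]
    exact Finset.sum_range_sub (fun j => f (S j)) t
  have hσle : ∀ t, t ≤ b → σ t ≤ f (S t) := by
    intro t htb
    have h1 : σ t ≤ ∑ j ∈ Finset.range t, ρ j := by
      simp only [hσ]
      apply Finset.sum_le_sum
      intro j hj
      by_cases hje : e j ∈ Sstar
      · rw [if_pos hje]
      · rw [if_neg hje]
        exact hρnn j (by have := Finset.mem_range.mp hj; omega)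
    rw [htel t, hS0, hf0] at h1
    linarith
  have hXnn : ∀ t, t ≤ b → 0 ≤ X t := by
    intro t htb
    have h1 := hopt (S t) (hfeasS t htb)
    have h2 := hσle t htb
    have h3 : (1 - α) * σ t ≤ (1 - α) * f (S t) :=
      mul_le_mul_of_nonneg_left h2 (by linarith)
    simp only [hX]
    nlinarith
  have hsc_le_t : ∀ t, sc t ≤ t := by
    intro t
    simp only [hsc]
    calc ((Finset.range t).filter fun j => e j ∈ Sstar).card
        ≤ (Finset.range t).card := Finset.card_filter_le _ _
      _ = t := Finset.card_range t
  have hein : ∀ j t, j < t → t ≤ b → e j ∈ S t := by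
    intro j t hjt htb
    have h1 : e j ∈ S (j + 1) := by
      rw [he3 j (by omega)]; exact Finset.mem_insert_self _ _
    exact hmono2 (j + 1) t hjt htb h1
  have hinj : ∀ j j', j < j' → j' < b → e j ≠ e j' := by
    intro j j' hjj' hj'b heq
    exact he1 j' hj'b (heq ▸ hein j j' hjj' (le_of_lt hj'b))
  have hscint : ∀ t, t ≤ b → sc t ≤ (Sstar ∩ S t).card := by
    intro t htb
    simp only [hsc]
    apply Finset.card_le_card_of_injOn (fun j => e j)
    · intro j hj
      simp only [Finset.mem_coe, Finset.mem_filter, Finset.mem_range] at hj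
      exact Finset.mem_inter.mpr ⟨hj.2, hein j t hj.1 htb⟩
    · intro j hj j' hj' hee
      simp only [Finset.coe_filter, Set.mem_setOf_eq, Finset.mem_range] at hj hj'
      by_contra hne
      rcases lt_or_gt_of_ne hne with h | h
      · exact hinj j j' h (by omega) hee
      · exact hinj j' j h (by omega) hee.symm
  have hcardΩ : Sstar.card ≤ b := by
    have h1 := Finset.card_eq_sum_card_fiberwise
      (f := part) (s := Sstar) (t := Finset.univ) (fun x _ => Finset.mem_univ _)
    rw [h1, hb]
    exact Finset.sum_le_sum (fun i _ => hfeas i)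
  have hsdcard : ∀ t, t ≤ b → ((Sstar \ S t).card : ℝ) ≤ (b : ℝ) - (sc t : ℝ) := by
    intro t htb
    have h1 : (Sstar \ S t).card + (Sstar ∩ S t).card = Sstar.card :=
      Finset.card_sdiff_add_card_inter _ _
    have h2 := hscint t htb
    have h3 : (Sstar \ S t).card + sc t ≤ b := by omega
    have h4 : (((Sstar \ S t).card + sc t : ℕ) : ℝ) ≤ (b : ℝ) := by exact_mod_cast h3
    push_cast at h4
    linarith
  have hlegal : ∀ t, t < bhat → ∀ o, o ∉ S t →
      ((S t).filter fun x => part x = part o).card < bi (part o) := by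
    intro t ht o _
    have h1 : ((S t).filter fun x => part x = part o).card ≤ (S t).card :=
      Finset.card_filter_le _ _
    have h2 := hcard t (by omega)
    have h3 := hbhat_le (part o)
    omega
  have hgreedy : ∀ t, t < bhat → ∀ o, o ∉ S t → f (insert o (S t)) - f (S t) ≤ ρ t := by
    intro t ht o ho
    have htb : t < b := lt_of_lt_of_le ht hbhatb
    have h := he4 t htb o ho (hlegal t ht o ho)
    simp only [hρ]
    rw [he3 t htb]
    exact h
  -- Claim B auxiliary chain
  have hB_aux : ∀ t, t < bhat → ∀ R : Finset ι, R ⊆ Sstar \ S t →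
      f (S t ∪ R) ≤ f (S t) + (R.card : ℝ) * (ρ t / γ) := by
    intro t ht R
    induction R using Finset.induction_on with
    | empty => intro _; simp
    | @insert a R ha ih =>
      intro hsub'
      have haS : a ∈ Sstar \ S t := hsub' (Finset.mem_insert_self a R)
      have hRs : R ⊆ Sstar \ S t := fun x hx => hsub' (Finset.mem_insert_of_mem hx)
      have haSt : a ∉ S t := (Finset.mem_sdiff.mp haS).2
      have hanotin : a ∉ S t ∪ R := by
        rw [Finset.mem_union]; push_neg; exact ⟨haSt, ha⟩
      have hfeasD : ∀ i, (((S t ∪ R) \ S t).filter fun x => part x = i).card ≤ bi i := by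
        intro i
        have hss : (S t ∪ R) \ S t ⊆ Sstar := by
          intro x hx
          rw [Finset.mem_sdiff, Finset.mem_union] at hx
          rcases hx.1 with h | h
          · exact absurd h hx.2
          · exact (Finset.mem_sdiff.mp (hRs h)).1
        exact le_trans (Finset.card_le_card (Finset.filter_subset_filter _ hss)) (hfeas i)
      have hDRstep := hDR (S t) (S t ∪ R) Finset.subset_union_left hfeasD a hanotin
      have hmarg := hgreedy t ht a haSt
      have h5 : f (insert a (S t ∪ R)) - f (S t ∪ R) ≤ ρ t / γ := by
        rw [le_div_iff₀ hγ0]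
        nlinarith
      have ihh := ih hRs
      have hUnion : S t ∪ insert a R = insert a (S t ∪ R) := Finset.union_insert _ _ _
      rw [hUnion, Finset.card_insert_of_notMem ha]
      push_cast
      calc f (insert a (S t ∪ R)) ≤ f (S t ∪ R) + ρ t / γ := by linarith
        _ ≤ f (S t) + (R.card : ℝ) * (ρ t / γ) + ρ t / γ := by linarith
        _ = f (S t) + ((R.card : ℝ) + 1) * (ρ t / γ) := by ring
  have hClaimB : ∀ t, t < bhat → f (Sstar ∪ S t) ≤ f (S t) + ((b : ℝ) - sc t) * (ρ t / γ) := by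
    intro t ht
    have htb : t ≤ b := by omega
    have h1 := hB_aux t ht (Sstar \ S t) subset_rfl
    have h2 : S t ∪ (Sstar \ S t) = Sstar ∪ S t := by
      rw [Finset.union_sdiff_self_eq_union, Finset.union_comm]
    rw [h2] at h1
    have h3 := hsdcard t htb
    have hργ : 0 ≤ ρ t / γ := div_nonneg (hρnn t (by omega)) (le_of_lt hγ0)
    nlinarith
  -- Claim A
  have hClaimA : ∀ t, t ≤ b → f Sstar + (1 - α) * (f (S t) - σ t) ≤ f (Sstar ∪ S t) := by
    intro t
    induction t with
    | zero =>
      intro _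
      rw [hS0, hσ0, Finset.union_empty, hf0]
      norm_num
    | succ n ih =>
      intro hnb
      have hnb' : n < b := by omega
      have ihh := ih (by omega)
      have hσsucc : σ (n + 1) = σ n + (if e n ∈ Sstar then ρ n else 0) := by
        simp only [hσ]; rw [Finset.sum_range_succ]
      have hfsucc : f (S (n + 1)) = f (S n) + ρ n := by simp only [hρ]; ring
      by_cases hen : e n ∈ Sstar
      · have hUeq : Sstar ∪ S (n + 1) = Sstar ∪ S n := by
          rw [he3 n hnb', Finset.union_insert,
            Finset.insert_eq_self.mpr (Finset.mem_union_left _ hen)]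
        rw [hUeq, hσsucc, if_pos hen, hfsucc]
        calc f Sstar + (1 - α) * (f (S n) + ρ n - (σ n + ρ n))
            = f Sstar + (1 - α) * (f (S n) - σ n) := by ring
          _ ≤ f (Sstar ∪ S n) := ihh
      · have hUeq : Sstar ∪ S (n + 1) = insert (e n) (Sstar ∪ S n) := by
          rw [he3 n hnb', Finset.union_insert]
        have hfeasD : ∀ i, (((Sstar ∪ S n) \ S n).filter fun x => part x = i).card ≤ bi i := by
          intro i
          have hss : (Sstar ∪ S n) \ S n ⊆ Sstar := by
            intro x hx
            rw [Finset.mem_sdiff, Finset.mem_union] at hx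
            rcases hx.1 with h | h
            · exact h
            · exact absurd h hx.2
          exact le_trans (Finset.card_le_card (Finset.filter_subset_filter _ hss)) (hfeas i)
        have hnotinT : e n ∉ Sstar ∪ S n := by
          rw [Finset.mem_union]; push_neg; exact ⟨hen, he1 n hnb'⟩
        have hcurv := hCurv (S n) (Sstar ∪ S n) Finset.subset_union_right hfeasD (e n) hnotinT
        have hins : f (insert (e n) (S n)) - f (S n) = ρ n := by
          simp only [hρ]; rw [he3 n hnb']
        rw [hins] at hcurv
        rw [hUeq, hσsucc, if_neg hen, hfsucc]
        have hgoal : f Sstar + (1 - α) * (f (S n) + ρ n - (σ n + 0))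
            = f Sstar + (1 - α) * (f (S n) - σ n) + (1 - α) * ρ n := by ring
        rw [hgoal]
        linarith
  -- F1
  have hF1 : ∀ t, t < bhat → γ * X t ≤ ((b : ℝ) - sc t) * ρ t := by
    intro t ht
    have htb : t ≤ b := by omega
    have hA := hClaimA t htb
    have hB := hClaimB t ht
    have h1 : X t ≤ ((b : ℝ) - sc t) * (ρ t / γ) := by
      simp only [hX]; linarith
    have h2 : γ * (((b : ℝ) - sc t) * (ρ t / γ)) = ((b : ℝ) - sc t) * ρ t := by
      field_simp
    calc γ * X t ≤ γ * (((b : ℝ) - sc t) * (ρ t / γ)) :=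
          mul_le_mul_of_nonneg_left h1 (le_of_lt hγ0)
      _ = ((b : ℝ) - sc t) * ρ t := h2
  have hscsucc : ∀ n, sc (n + 1) = if e n ∈ Sstar then sc n + 1 else sc n := by
    intro n
    simp only [hsc]
    rw [Finset.range_add_one, Finset.filter_insert]
    split_ifs with h
    · rw [Finset.card_insert_of_notMem (by simp)]
    · rfl
  -- the invariant
  set A : ℕ → ℝ :=
    fun t => (1 - α) * σ t + X t * (1 - α * γ / ((b : ℝ) - (sc t : ℕ))) ^ (bhat - t) with hA
  have hAstep : ∀ t, t < bhat → A (t + 1) ≤ A t := by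
    intro t ht
    have htb : t < b := by omega
    have hst : sc t ≤ t := hsc_le_t t
    have hbt1 : bhat - t = (bhat - t - 1) + 1 := by omega
    have hbt2 : bhat - (t + 1) = bhat - t - 1 := by omega
    set m : ℕ := bhat - t - 1 with hmdef
    set c : ℝ := (b : ℝ) - (sc t : ℕ) with hcdef
    have hc1 : (1 : ℝ) ≤ c := by
      rw [hcdef]
      have h1 : sc t + 1 ≤ b := by omega
      have h2 : ((sc t : ℕ) : ℝ) + 1 ≤ (b : ℝ) := by exact_mod_cast h1
      linarith
    have hc0 : (0 : ℝ) < c := by linarith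
    have hmc : (m : ℝ) ≤ c - 1 := by
      rw [hcdef]
      have h1 : m + sc t + 1 ≤ b := by omega
      have h2 : ((m : ℕ) : ℝ) + ((sc t : ℕ) : ℝ) + 1 ≤ (b : ℝ) := by exact_mod_cast h1
      linarith
    have hXt := hXnn t (by omega)
    have hF := hF1 t ht
    have hρt := hρnn t htb
    have hσu : σ (t + 1) = σ t + (if e t ∈ Sstar then ρ t else 0) := by
      simp only [hσ]; rw [Finset.sum_range_succ]
    have hfu : f (S (t + 1)) = f (S t) + ρ t := by simp only [hρ]; ring
    have hαγ1 : α * γ ≤ 1 := by nlinarith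
    have hP0 : (0 : ℝ) ≤ 1 - α * γ / c := by
      have h2 : α * γ / c ≤ 1 := by
        rw [div_le_one hc0]; linarith
      linarith
    have hρXc : γ * X t / c ≤ ρ t := by
      rw [div_le_iff₀ hc0]
      calc γ * X t ≤ c * ρ t := hF
        _ = ρ t * c := by ring
    by_cases hen : e t ∈ Sstar
    · -- overlap step
      have hscu : ((sc (t + 1) : ℕ) : ℝ) = ((sc t : ℕ) : ℝ) + 1 := by
        rw [hscsucc t, if_pos hen]; push_cast; ring
      have hXu : X (t + 1) = X t - ρ t := by
        simp only [hX]; rw [hfu, hσu, if_pos hen]; ring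
      have hbase : (b : ℝ) - ((sc (t + 1) : ℕ) : ℝ) = c - 1 := by
        rw [hscu, hcdef]; ring
      have hAt1 : A (t + 1) = (1 - α) * (σ t + ρ t) + (X t - ρ t) * (1 - α * γ / (c - 1)) ^ m := by
        simp only [hA]
        rw [hbt2, hbase, hXu, hσu, if_pos hen]
      have hAt : A t = (1 - α) * σ t + X t * (1 - α * γ / c) ^ (m + 1) := by
        simp only [hA]
        rw [hbt1, ← hcdef]
      rw [hAt1, hAt]
      -- Q^m ≥ 1 - α
      have hQm : (1 : ℝ) - α ≤ (1 - α * γ / (c - 1)) ^ m := by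
        rcases Nat.eq_zero_or_pos m with h0 | hpos
        · rw [h0]; norm_num; linarith
        · have hm1 : (1 : ℝ) ≤ (m : ℝ) := by exact_mod_cast hpos
          have hc2 : (0 : ℝ) < c - 1 := by linarith
          have hd0 : 0 ≤ α * γ / (c - 1) := by positivity
          have hmc1 : (1:ℝ) ≤ c - 1 := le_trans hm1 hmc
          have hd2 : α * γ / (c - 1) ≤ 1 := by
            rw [div_le_one hc2]; linarith
          have hB := one_add_mul_le_pow (a := -(α * γ / (c - 1))) (by linarith) m
          have he0 : (1 : ℝ) + (m : ℝ) * -(α * γ / (c - 1)) = 1 - (m : ℝ) * (α * γ / (c - 1)) := by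
            ring
          have he1' : ((1 : ℝ) + -(α * γ / (c - 1))) = 1 - α * γ / (c - 1) := by ring
          rw [he0, he1'] at hB
          have h2 : (m : ℝ) * (α * γ / (c - 1)) ≤ α := by
            have h3 : (m : ℝ) * γ ≤ c - 1 := by nlinarith
            have h4 : (m : ℝ) * (α * γ / (c - 1)) = α * ((m : ℝ) * γ / (c - 1)) := by ring
            rw [h4]
            have h5 : (m : ℝ) * γ / (c - 1) ≤ 1 := by rw [div_le_one hc2]; exact h3
            nlinarith
          linarith
      have haux := aux_pow_ineq γ α c m hγ0 hγ1 hα0 hα1 hc1 hmc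
      have h6 : ρ t * ((1 - α) - (1 - α * γ / (c - 1)) ^ m)
          ≤ (γ * X t / c) * ((1 - α) - (1 - α * γ / (c - 1)) ^ m) :=
        mul_le_mul_of_nonpos_right hρXc (by linarith)
      have h7 : X t * ((1 - α * γ / (c - 1)) ^ m * (1 - γ / c) + (1 - α) * (γ / c))
          ≤ X t * (1 - α * γ / c) ^ (m + 1) := by
        apply mul_le_mul_of_nonneg_left _ hXt
        linarith
      have h8 : X t * (1 - α * γ / (c - 1)) ^ m
            + (γ * X t / c) * ((1 - α) - (1 - α * γ / (c - 1)) ^ m)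
          = X t * ((1 - α * γ / (c - 1)) ^ m * (1 - γ / c) + (1 - α) * (γ / c)) := by
        field_simp
        ring
      nlinarith [h6, h7, h8]
    · -- non-overlap step
      have hscu : sc (t + 1) = sc t := by rw [hscsucc t, if_neg hen]
      have hXu : X (t + 1) = X t - α * ρ t := by
        simp only [hX]; rw [hfu, hσu, if_neg hen]; ring
      have hAt1 : A (t + 1) = (1 - α) * σ t + X (t + 1) * (1 - α * γ / c) ^ m := by
        simp only [hA]
        rw [hbt2, hscu, ← hcdef, hσu, if_neg hen, add_zero]
      have hAt : A t = (1 - α) * σ t + X t * (1 - α * γ / c) ^ (m + 1) := by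
        simp only [hA]
        rw [hbt1, ← hcdef]
      rw [hAt1, hAt]
      have hXc : X (t + 1) ≤ X t * (1 - α * γ / c) := by
        rw [hXu]
        have h9 : α * (γ * X t / c) ≤ α * ρ t := mul_le_mul_of_nonneg_left hρXc hα0
        have h10 : X t * (1 - α * γ / c) = X t - α * (γ * X t / c) := by
          field_simp
        linarith
      have hpow : X (t + 1) * (1 - α * γ / c) ^ m ≤ X t * (1 - α * γ / c) ^ (m + 1) := by
        calc X (t + 1) * (1 - α * γ / c) ^ m
            ≤ (X t * (1 - α * γ / c)) * (1 - α * γ / c) ^ m :=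
              mul_le_mul_of_nonneg_right hXc (pow_nonneg hP0 m)
          _ = X t * (1 - α * γ / c) ^ (m + 1) := by rw [pow_succ]; ring
      linarith
  -- chain
  have hchain' : ∀ t, t ≤ bhat → A t ≤ A 0 := by
    intro t
    induction t with
    | zero => intro _; exact le_rfl
    | succ n ih =>
      intro hn
      exact le_trans (hAstep n (by omega)) (ih (by omega))
  have hchain := hchain' bhat le_rfl
  have hX0 : X 0 = f Sstar := by
    simp only [hX]; rw [hS0, hf0, hσ0]; ring
  have hA0 : A 0 = f Sstar * (1 - α * γ / (b : ℝ)) ^ bhat := by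
    simp only [hA]
    rw [hσ0, hsc0, hX0]
    norm_num
  have hAbhat : A bhat = f Sstar - α * f (S bhat) := by
    simp only [hA]
    rw [Nat.sub_self, pow_zero, mul_one]
    simp only [hX]
    ring
  rw [hA0, hAbhat] at hchain
  have hmonof : f (S bhat) ≤ f (S b) := hmono _ _ (hmono2 bhat b hbhatb le_rfl)
  have hfb : α * f (S bhat) ≤ α * f (S b) := mul_le_mul_of_nonneg_left hmonof hα0
  have hring : (1 - (1 - α * γ / (b : ℝ)) ^ bhat) * f Sstar
      = f Sstar - f Sstar * (1 - α * γ / (b : ℝ)) ^ bhat := by ring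
  linarith
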